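/- For every bounded linear operator A on a complex Hilbert space, w(A)² ≤ (1/4)‖ A*A + AA* ‖ + (1/2)‖ |A| · |A*| ‖. -/

import Mathlib

open ContinuousLinearMap

/-- The numerical radius of a bounded operator. -/
noncomputable def numRad {H : Type*} [NormedAddCommGroup H] [InnerProductSpace ℂ H]
    (A : H →L[ℂ] H) : ℝ :=
  sSup {r : ℝ | ∃ x : H, ‖x‖ = 1 ∧ r = ‖(inner ℂ (A x) x : ℂ)‖}

section Aux

lemma aux_le_of_forall_pos (a b : ℝ) (h : ∀ ε > 0, a ≤ b + ε) : a ≤ b := by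
  by_contra hc
  push_neg at hc
  have := h ((a - b) / 2) (by linarith)
  linarith

variable {H : Type*} [NormedAddCommGroup H] [InnerProductSpace ℂ H] [CompleteSpace H]

/-- Weierstrass approximation, extracted in pointwise form. -/
lemma exists_poly_approx (f : ℝ → ℝ) (hf : Continuous f) (a b ε : ℝ) (hε : 0 < ε) :
    ∃ p : Polynomial ℝ, ∀ x ∈ Set.Icc a b, |f x - p.eval x| < ε := by
  set K : Set ℝ := Set.Icc a b
  set g : C(K, ℝ) := ⟨fun x => f x, hf.comp continuous_subtype_val⟩
  have hmem : g ∈ (polynomialFunctions K).topologicalClosure := by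
    rw [polynomialFunctions_closure_eq_top a b]
    trivial
  have hmem' : g ∈ closure (polynomialFunctions K : Set C(K, ℝ)) := hmem
  rw [Metric.mem_closure_iff] at hmem'
  obtain ⟨h, hh, hdist⟩ := hmem' ε hε
  have : h ∈ Set.range (Polynomial.toContinuousMapOnAlgHom K) := by
    rwa [← polynomialFunctions_coe]
  obtain ⟨p, rfl⟩ := this
  refine ⟨p, fun x hx => ?_⟩
  have h1 := ContinuousMap.dist_apply_le_dist (f := g)
    (g := Polynomial.toContinuousMapOnAlgHom K p) ⟨x, hx⟩
  have h2 : dist (g ⟨x, hx⟩) ((Polynomial.toContinuousMapOnAlgHom K p) ⟨x, hx⟩) < ε :=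
    lt_of_le_of_lt h1 hdist
  simpa [g, Real.dist_eq, Polynomial.toContinuousMapOnAlgHom,
    Polynomial.toContinuousMapOn, Polynomial.toContinuousMap] using h2

lemma intertwine_aeval (B T S : H →L[ℂ] H) (h : B * T = S * B) (p : Polynomial ℝ) :
    B * Polynomial.aeval T p = Polynomial.aeval S p * B := by
  have hpow : ∀ n : ℕ, B * T ^ n = S ^ n * B := by
    intro n
    induction n with
    | zero => simp
    | succ n ih =>
        rw [pow_succ, pow_succ, ← mul_assoc, ih, mul_assoc, h, ← mul_assoc]
  rw [Polynomial.aeval_eq_sum_range (x := T), Polynomial.aeval_eq_sum_range (x := S),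
    Finset.mul_sum, Finset.sum_mul]
  refine Finset.sum_congr rfl fun i _ => ?_
  rw [mul_smul_comm, smul_mul_assoc, hpow i]

set_option maxHeartbeats 1000000 in
/-- Intertwining passes to the continuous functional calculus. -/
lemma intertwine_cfc (B T S : H →L[ℂ] H) (hT : IsSelfAdjoint T) (hS : IsSelfAdjoint S)
    (h : B * T = S * B) (f : ℝ → ℝ) (hf : Continuous f) :
    B * cfc f T = cfc f S * B := by
  rcases subsingleton_or_nontrivial H with hH | hH
  · apply ContinuousLinearMap.ext
    intro x
    exact Subsingleton.elim _ _
  have key : ∀ ε > (0:ℝ), ‖B * cfc f T - cfc f S * B‖ ≤ ε * (2 * ‖B‖) := by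
    intro ε hε
    obtain ⟨p, hp⟩ := exists_poly_approx f hf (-(max ‖T‖ ‖S‖)) (max ‖T‖ ‖S‖) ε hε
    have hbT : ∀ t ∈ spectrum ℝ T, t ∈ Set.Icc (-(max ‖T‖ ‖S‖)) (max ‖T‖ ‖S‖) := by
      intro t ht
      have h1 : |t| ≤ ‖T‖ := by simpa using spectrum.norm_le_norm_of_mem ht
      have h2 := abs_le.mp (h1.trans (le_max_left ‖T‖ ‖S‖))
      exact ⟨h2.1, h2.2⟩
    have hbS : ∀ t ∈ spectrum ℝ S, t ∈ Set.Icc (-(max ‖T‖ ‖S‖)) (max ‖T‖ ‖S‖) := by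
      intro t ht
      have h1 : |t| ≤ ‖S‖ := by simpa using spectrum.norm_le_norm_of_mem ht
      have h2 := abs_le.mp (h1.trans (le_max_right ‖T‖ ‖S‖))
      exact ⟨h2.1, h2.2⟩
    have hT' : ‖cfc f T - Polynomial.aeval T p‖ ≤ ε := by
      rw [← cfc_polynomial p T hT, ← cfc_sub f (fun t => Polynomial.eval t p) T
        hf.continuousOn p.continuousOn]
      exact norm_cfc_le hε.le fun t ht => by
        simpa [Real.norm_eq_abs] using (hp t (hbT t ht)).le
    have hS' : ‖cfc f S - Polynomial.aeval S p‖ ≤ ε := by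
      rw [← cfc_polynomial p S hS, ← cfc_sub f (fun t => Polynomial.eval t p) S
        hf.continuousOn p.continuousOn]
      exact norm_cfc_le hε.le fun t ht => by
        simpa [Real.norm_eq_abs] using (hp t (hbS t ht)).le
    have hcomm := intertwine_aeval B T S h p
    have hsplit : B * cfc f T - cfc f S * B
        = B * (cfc f T - Polynomial.aeval T p) - (cfc f S - Polynomial.aeval S p) * B := by
      rw [mul_sub, sub_mul, hcomm]
      abel
    calc ‖B * cfc f T - cfc f S * B‖
        = ‖B * (cfc f T - Polynomial.aeval T p) - (cfc f S - Polynomial.aeval S p) * B‖ := by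
          rw [hsplit]
      _ ≤ ‖B * (cfc f T - Polynomial.aeval T p)‖ + ‖(cfc f S - Polynomial.aeval S p) * B‖ :=
          norm_sub_le _ _
      _ ≤ ‖B‖ * ‖cfc f T - Polynomial.aeval T p‖ + ‖cfc f S - Polynomial.aeval S p‖ * ‖B‖ := by
          gcongr <;> [exact norm_mul_le _ _; exact norm_mul_le _ _]
      _ ≤ ‖B‖ * ε + ε * ‖B‖ := by
          gcongr
      _ = ε * (2 * ‖B‖) := by ring
  rw [← sub_eq_zero]
  by_contra hne
  have hpos : 0 < ‖B * cfc f T - cfc f S * B‖ := norm_pos_iff.mpr hne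
  set c := ‖B * cfc f T - cfc f S * B‖ with hc
  have hden : (0:ℝ) < 2 * ‖B‖ + 1 := by positivity
  have h2 := key (c / (2 * ‖B‖ + 1)) (by positivity)
  rw [div_mul_eq_mul_div, le_div_iff₀ hden] at h2
  have h3 : c * (2 * ‖B‖ + 1) = c * (2 * ‖B‖) + c := by ring
  rw [h3] at h2
  linarith

set_option maxHeartbeats 2000000 in
/-- The mixed Schwarz inequality, in additive (AM-GM'd) form. -/
lemma mixed_schwarz (A P Q : H →L[ℂ] H) (hP : P.IsPositive) (hP2 : P * P = adjoint A * A)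
    (hQ : Q.IsPositive) (hQ2 : Q * Q = A * adjoint A) (x : H) :
    ‖(inner ℂ (A x) x : ℂ)‖ ≤
      ((inner ℂ (P x) x : ℂ).re + ((inner ℂ (Q x) x : ℂ).re)) / 2 := by
  have hPsa : IsSelfAdjoint P := hP.isSelfAdjoint
  have hQsa : IsSelfAdjoint Q := hQ.isSelfAdjoint
  have hP0 : (0 : H →L[ℂ] H) ≤ P := (nonneg_iff_isPositive P).mpr hP
  have hQ0 : (0 : H →L[ℂ] H) ≤ Q := (nonneg_iff_isPositive Q).mpr hQ
  have hspP : ∀ t ∈ spectrum ℝ P, 0 ≤ t := fun t ht => spectrum_nonneg_of_nonneg hP0 ht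
  have hspQ : ∀ t ∈ spectrum ℝ Q, 0 ≤ t := fun t ht => spectrum_nonneg_of_nonneg hQ0 ht
  -- P and Q are intertwined by A
  have hPPsa : IsSelfAdjoint (P * P) := by
    rw [IsSelfAdjoint, star_mul, hPsa.star_eq]
  have hQQsa : IsSelfAdjoint (Q * Q) := by
    rw [IsSelfAdjoint, star_mul, hQsa.star_eq]
  have hsqP : cfc Real.sqrt (P * P) = P := by
    have h1 : P * P = cfc (fun t : ℝ => t * t) P := by
      rw [cfc_mul (fun t : ℝ => t) (fun t : ℝ => t) P continuous_id'.continuousOn continuous_id'.continuousOn, cfc_id' ℝ P]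
    rw [h1, ← cfc_comp Real.sqrt (fun t : ℝ => t * t) P hPsa
      Real.continuous_sqrt.continuousOn (continuous_id.mul continuous_id).continuousOn]
    have h2 : (spectrum ℝ P).EqOn (Real.sqrt ∘ fun t : ℝ => t * t) id := by
      intro t ht
      simp [Function.comp, Real.sqrt_mul_self (hspP t ht)]
    rw [cfc_congr h2, cfc_id ℝ P]
  have hsqQ : cfc Real.sqrt (Q * Q) = Q := by
    have h1 : Q * Q = cfc (fun t : ℝ => t * t) Q := by
      rw [cfc_mul (fun t : ℝ => t) (fun t : ℝ => t) Q continuous_id'.continuousOn continuous_id'.continuousOn, cfc_id' ℝ Q]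
    rw [h1, ← cfc_comp Real.sqrt (fun t : ℝ => t * t) Q hQsa
      Real.continuous_sqrt.continuousOn (continuous_id.mul continuous_id).continuousOn]
    have h2 : (spectrum ℝ Q).EqOn (Real.sqrt ∘ fun t : ℝ => t * t) id := by
      intro t ht
      simp [Function.comp, Real.sqrt_mul_self (hspQ t ht)]
    rw [cfc_congr h2, cfc_id ℝ Q]
  have hAP : A * P = Q * A := by
    have h1 : A * (P * P) = (Q * Q) * A := by
      rw [hP2, hQ2, ← mul_assoc]
    have h2 := intertwine_cfc A (P * P) (Q * Q) hPPsa hQQsa h1 Real.sqrt Real.continuous_sqrt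
    rwa [hsqP, hsqQ] at h2
  have hA'Q : adjoint A * Q = P * adjoint A := by
    have h1 := congrArg star hAP
    rw [star_mul, star_mul, hPsa.star_eq, hQsa.star_eq, star_eq_adjoint] at h1
    exact h1.symm
  -- the ε-regularized estimate
  have key : ∀ ε : ℝ, 0 < ε →
      ‖(inner ℂ (A x) x : ℂ)‖ ≤
        ((inner ℂ (P x) x : ℂ).re + ((inner ℂ (Q x) x : ℂ).re)) / 2 + ε * ‖x‖ ^ 2 := by
    intro ε hε
    set u : ℝ → ℝ := fun t => Real.sqrt (max t 0 + ε) with hu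
    set v : ℝ → ℝ := fun t => (Real.sqrt (max t 0 + ε))⁻¹ with hv
    have hmax : ∀ t : ℝ, (0:ℝ) < max t 0 + ε := fun t => by
      have := le_max_right t 0
      linarith
    have hupos : ∀ t, 0 < u t := fun t => Real.sqrt_pos.mpr (hmax t)
    have hucont : Continuous u :=
      Real.continuous_sqrt.comp ((continuous_id.max continuous_const).add continuous_const)
    have hvcont : Continuous v := hucont.inv₀ fun t => (hupos t).ne'
    have huv : (fun t => u t * v t) = fun _ => (1:ℝ) :=
      funext fun t => mul_inv_cancel₀ (hupos t).ne'
    have hvu : (fun t => v t * u t) = fun _ => (1:ℝ) :=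
      funext fun t => inv_mul_cancel₀ (hupos t).ne'
    set X := cfc u P with hX
    set X' := cfc u Q with hX'
    set Y := cfc v P with hY
    set Y' := cfc v Q with hY'
    have hXY : X * Y = 1 := by
      rw [hX, hY, ← cfc_mul u v P hucont.continuousOn hvcont.continuousOn, huv,
        cfc_const_one ℝ P]
    have hYX : Y * X = 1 := by
      rw [hX, hY, ← cfc_mul v u P hvcont.continuousOn hucont.continuousOn, hvu,
        cfc_const_one ℝ P]
    have hX'Y' : X' * Y' = 1 := by
      rw [hX', hY', ← cfc_mul u v Q hucont.continuousOn hvcont.continuousOn, huv,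
        cfc_const_one ℝ Q]
    have hXsa : IsSelfAdjoint X := cfc_predicate u P
    have hX'sa : IsSelfAdjoint X' := cfc_predicate u Q
    have hYsa : IsSelfAdjoint Y := cfc_predicate v P
    have hY'sa : IsSelfAdjoint Y' := cfc_predicate v Q
    have hXX : X * X = P + algebraMap ℝ (H →L[ℂ] H) ε := by
      rw [hX, ← cfc_mul u u P hucont.continuousOn hucont.continuousOn]
      have h1 : (spectrum ℝ P).EqOn (fun t => u t * u t) (fun t => id t + ε) := by
        intro t ht
        have h0 := hspP t ht
        show Real.sqrt (max t 0 + ε) * Real.sqrt (max t 0 + ε) = id t + ε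
        rw [max_eq_left h0, id_eq]
        exact Real.mul_self_sqrt (by linarith)
      rw [cfc_congr h1, cfc_add_const ε id P continuousOn_id hPsa, cfc_id ℝ P]
    have hX'X' : X' * X' = Q + algebraMap ℝ (H →L[ℂ] H) ε := by
      rw [hX', ← cfc_mul u u Q hucont.continuousOn hucont.continuousOn]
      have h1 : (spectrum ℝ Q).EqOn (fun t => u t * u t) (fun t => id t + ε) := by
        intro t ht
        have h0 := hspQ t ht
        show Real.sqrt (max t 0 + ε) * Real.sqrt (max t 0 + ε) = id t + ε
        rw [max_eq_left h0, id_eq]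
        exact Real.mul_self_sqrt (by linarith)
      rw [cfc_congr h1, cfc_add_const ε id Q continuousOn_id hQsa, cfc_id ℝ Q]
    set D := Y' * A * Y with hD
    -- ‖D‖ ≤ 1
    have hvv : Y' * Y' = cfc (fun t => v t * v t) Q :=
      (cfc_mul v v Q hvcont.continuousOn hvcont.continuousOn).symm
    have hint : adjoint A * cfc (fun t => v t * v t) Q
        = cfc (fun t => v t * v t) P * adjoint A :=
      intertwine_cfc (adjoint A) Q P hQsa hPsa hA'Q _ (hvcont.mul hvcont)
    have hstarD : star D * D = Y * (cfc (fun t => v t * v t) P * (P * (P * Y))) := by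
      have e1 : star D = Y * (adjoint A * Y') := by
        rw [hD, star_mul, star_mul, hYsa.star_eq, hY'sa.star_eq, star_eq_adjoint]
      rw [e1]
      have e2 : Y * (adjoint A * Y') * (Y' * A * Y)
          = Y * (adjoint A * ((Y' * Y') * (A * Y))) := by
        simp only [mul_assoc]
      rw [e2, hvv, ← mul_assoc (adjoint A), hint]
      have e3 : Y * (cfc (fun t => v t * v t) P * adjoint A * (A * Y))
          = Y * (cfc (fun t => v t * v t) P * ((adjoint A * A) * Y)) := by
        simp only [mul_assoc]
      rw [e3, ← hP2]
      simp only [mul_assoc]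
    have hF : star D * D = cfc (fun t => v t * (v t * v t * (t * (t * v t)))) P := by
      rw [hstarD]
      have c1 : P * Y = cfc (fun t => t * v t) P := by
        rw [cfc_mul (fun t : ℝ => t) v P continuous_id'.continuousOn hvcont.continuousOn,
          cfc_id' ℝ P]
      have c2 : P * (P * Y) = cfc (fun t => t * (t * v t)) P := by
        rw [cfc_mul (fun t : ℝ => t) (fun t => t * v t) P continuous_id'.continuousOn
          (continuous_id'.mul hvcont).continuousOn, cfc_id' ℝ P, ← c1]
      have c3 : cfc (fun t => v t * v t) P * (P * (P * Y))
          = cfc (fun t => v t * v t * (t * (t * v t))) P := by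
        rw [cfc_mul (fun t => v t * v t) (fun t => t * (t * v t)) P
          (hvcont.mul hvcont).continuousOn
          (continuous_id'.mul (continuous_id'.mul hvcont)).continuousOn, ← c2]
      rw [cfc_mul v (fun t => v t * v t * (t * (t * v t))) P hvcont.continuousOn
        ((hvcont.mul hvcont).mul (continuous_id'.mul (continuous_id'.mul hvcont))).continuousOn,
        ← c3]
    have hDnorm : ‖D‖ ≤ 1 := by
      have h1 : ‖star D * D‖ ≤ 1 := by
        rw [hF]
        refine norm_cfc_le zero_le_one fun t ht => ?_
        have h0 := hspP t ht
        have hm : max t 0 = t := max_eq_left h0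
        have hs : Real.sqrt (t + ε) * Real.sqrt (t + ε) = t + ε :=
          Real.mul_self_sqrt (by linarith)
        have hsp : 0 < Real.sqrt (t + ε) := Real.sqrt_pos.mpr (by linarith)
        have hval : v t = (Real.sqrt (t + ε))⁻¹ := by simp [hv, hm]
        rw [Real.norm_eq_abs, hval]
        set s := Real.sqrt (t + ε)
        have hs0 : s ≠ 0 := hsp.ne'
        have hexpr : s⁻¹ * (s⁻¹ * s⁻¹ * (t * (t * s⁻¹))) = t ^ 2 / (t + ε) ^ 2 := by
          rw [← hs]
          field_simp
        rw [hexpr, abs_of_nonneg (by positivity), div_le_one (by positivity)]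
        nlinarith
      have h2 : ‖star D * D‖ = ‖D‖ * ‖D‖ := CStarRing.norm_star_mul_self
      nlinarith [norm_nonneg D]
    -- A = X' * (D * X)
    have h1 : D * X = Y' * A := by
      have e : D * X = Y' * (A * (Y * X)) := by simp only [hD, mul_assoc]
      rw [e, hYX, mul_one]
    have hAeq : X' * (D * X) = A := by
      rw [h1, ← mul_assoc, hX'Y', one_mul]
    -- pointwise estimate
    have hadjX' : adjoint X' = X' := by rw [← star_eq_adjoint, hX'sa.star_eq]
    have hadjX : adjoint X = X := by rw [← star_eq_adjoint, hXsa.star_eq]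
    have happ : (inner ℂ (A x) x : ℂ) = inner ℂ (D (X x)) (X' x) := by
      conv_lhs => rw [← hAeq]
      rw [ContinuousLinearMap.mul_apply, ContinuousLinearMap.mul_apply]
      have h := adjoint_inner_left X' x (D (X x))
      rwa [hadjX'] at h
    have hXnorm : ‖X x‖ ^ 2 = (inner ℂ (P x) x : ℂ).re + ε * ‖x‖ ^ 2 := by
      have e1 : (inner ℂ (X (X x)) x : ℂ) = inner ℂ (X x) (X x) := by
        have h := adjoint_inner_left X x (X x)
        rwa [hadjX] at h
      have e2 : X (X x) = P x + (ε : ℂ) • x := by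
        have := congrArg (fun T : H →L[ℂ] H => T x) hXX
        simpa [mul_apply, Algebra.algebraMap_eq_smul_one, Complex.coe_smul] using this
      have e3 : ‖X x‖ ^ 2 = (inner ℂ (X x) (X x) : ℂ).re := by
        rw [← RCLike.re_to_complex]
        exact (inner_self_eq_norm_sq _).symm
      rw [e3, ← e1, e2, inner_add_left, inner_smul_left]
      have e4 : (inner ℂ x x : ℂ).re = ‖x‖ ^ 2 := by
        rw [← RCLike.re_to_complex]
        exact inner_self_eq_norm_sq x
      simp only [Complex.add_re, Complex.mul_re, Complex.conj_ofReal, Complex.ofReal_re,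
        Complex.ofReal_im, e4]
      ring
    have hX'norm : ‖X' x‖ ^ 2 = (inner ℂ (Q x) x : ℂ).re + ε * ‖x‖ ^ 2 := by
      have e1 : (inner ℂ (X' (X' x)) x : ℂ) = inner ℂ (X' x) (X' x) := by
        have h := adjoint_inner_left X' x (X' x)
        rwa [hadjX'] at h
      have e2 : X' (X' x) = Q x + (ε : ℂ) • x := by
        have := congrArg (fun T : H →L[ℂ] H => T x) hX'X'
        simpa [mul_apply, Algebra.algebraMap_eq_smul_one, Complex.coe_smul] using this
      have e3 : ‖X' x‖ ^ 2 = (inner ℂ (X' x) (X' x) : ℂ).re := by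
        rw [← RCLike.re_to_complex]
        exact (inner_self_eq_norm_sq _).symm
      rw [e3, ← e1, e2, inner_add_left, inner_smul_left]
      have e4 : (inner ℂ x x : ℂ).re = ‖x‖ ^ 2 := by
        rw [← RCLike.re_to_complex]
        exact inner_self_eq_norm_sq x
      simp only [Complex.add_re, Complex.mul_re, Complex.conj_ofReal, Complex.ofReal_re,
        Complex.ofReal_im, e4]
      ring
    have hb : ‖(inner ℂ (A x) x : ℂ)‖ ≤ ‖X x‖ * ‖X' x‖ := by
      rw [happ]
      calc ‖(inner ℂ (D (X x)) (X' x) : ℂ)‖ ≤ ‖D (X x)‖ * ‖X' x‖ := norm_inner_le_norm _ _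
        _ ≤ (‖D‖ * ‖X x‖) * ‖X' x‖ := by gcongr; exact le_opNorm D (X x)
        _ ≤ (1 * ‖X x‖) * ‖X' x‖ := by gcongr
        _ = ‖X x‖ * ‖X' x‖ := by ring
    have hb2 : ‖X x‖ * ‖X' x‖ ≤ (‖X x‖ ^ 2 + ‖X' x‖ ^ 2) / 2 := by
      nlinarith [sq_nonneg (‖X x‖ - ‖X' x‖)]
    calc ‖(inner ℂ (A x) x : ℂ)‖ ≤ (‖X x‖ ^ 2 + ‖X' x‖ ^ 2) / 2 := hb.trans hb2
      _ = ((inner ℂ (P x) x : ℂ).re + ((inner ℂ (Q x) x : ℂ).re)) / 2 + ε * ‖x‖ ^ 2 := by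
        rw [hXnorm, hX'norm]; ring
  -- let ε → 0
  apply aux_le_of_forall_pos
  intro ε hε
  have hε' : 0 < ε / (‖x‖ ^ 2 + 1) := by positivity
  have h1 := key (ε / (‖x‖ ^ 2 + 1)) hε'
  have h2 : ε / (‖x‖ ^ 2 + 1) * ‖x‖ ^ 2 ≤ ε := by
    rw [div_mul_eq_mul_div, div_le_iff₀ (by positivity)]
    nlinarith [sq_nonneg ‖x‖]
  linarith

end Aux

theorem numRad_sq_le_with_norm {H : Type*} [NormedAddCommGroup H] [InnerProductSpace ℂ H]
    [CompleteSpace H] (A P Q : H →L[ℂ] H)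
    (hP : P.IsPositive) (hP2 : P * P = adjoint A * A)
    (hQ : Q.IsPositive) (hQ2 : Q * Q = A * adjoint A) :
    numRad A ^ 2 ≤ (1 / 4) * ‖adjoint A * A + A * adjoint A‖ + (1 / 2) * ‖P * Q‖ := by
  have hPsa : IsSelfAdjoint P := hP.isSelfAdjoint
  have hQsa : IsSelfAdjoint Q := hQ.isSelfAdjoint
  -- numRad A ≤ ‖P + Q‖ / 2
  have hbound : ∀ x : H, ‖x‖ = 1 → ‖(inner ℂ (A x) x : ℂ)‖ ≤ ‖P + Q‖ / 2 := by
    intro x hx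
    have h1 := mixed_schwarz A P Q hP hP2 hQ hQ2 x
    have h2 : ((inner ℂ (P x) x : ℂ)).re + ((inner ℂ (Q x) x : ℂ)).re ≤ ‖P + Q‖ := by
      have e1 : ((inner ℂ (P x) x : ℂ)).re + ((inner ℂ (Q x) x : ℂ)).re
          = ((inner ℂ ((P + Q) x) x : ℂ)).re := by
        simp [inner_add_left]
      rw [e1]
      calc ((inner ℂ ((P + Q) x) x : ℂ)).re ≤ ‖(inner ℂ ((P + Q) x) x : ℂ)‖ := Complex.re_le_norm _
        _ ≤ ‖(P + Q) x‖ * ‖x‖ := norm_inner_le_norm _ _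
        _ ≤ (‖P + Q‖ * ‖x‖) * ‖x‖ := by gcongr; exact le_opNorm _ _
        _ = ‖P + Q‖ := by rw [hx]; ring
    linarith
  have hnum : numRad A ≤ ‖P + Q‖ / 2 := by
    apply Real.sSup_le
    · rintro r ⟨x, hx, rfl⟩
      exact hbound x hx
    · positivity
  have hnum0 : 0 ≤ numRad A := by
    apply Real.sSup_nonneg
    rintro r ⟨x, hx, rfl⟩
    exact norm_nonneg _
  have hsq : numRad A ^ 2 ≤ (‖P + Q‖ / 2) ^ 2 := by
    apply pow_le_pow_left₀ hnum0 hnum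
  -- ‖P + Q‖ ^ 2 = ‖(P+Q)*(P+Q)‖ and expansion
  have hPQsa : IsSelfAdjoint (P + Q) := hPsa.add hQsa
  have hnormsq : ‖P + Q‖ ^ 2 = ‖(P + Q) * (P + Q)‖ := by
    have := CStarRing.norm_star_mul_self (x := P + Q)
    rw [hPQsa.star_eq] at this
    rw [this]; ring
  have hexp : (P + Q) * (P + Q) = (adjoint A * A + A * adjoint A) + (P * Q + Q * P) := by
    rw [mul_add, add_mul, add_mul, ← hP2, ← hQ2]
    abel
  have hQP : ‖Q * P‖ = ‖P * Q‖ := by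
    have : star (P * Q) = Q * P := by rw [star_mul, hPsa.star_eq, hQsa.star_eq]
    rw [← this, norm_star]
  have hfinal : ‖(P + Q) * (P + Q)‖ ≤ ‖adjoint A * A + A * adjoint A‖ + 2 * ‖P * Q‖ := by
    rw [hexp]
    calc ‖(adjoint A * A + A * adjoint A) + (P * Q + Q * P)‖
        ≤ ‖adjoint A * A + A * adjoint A‖ + ‖P * Q + Q * P‖ := norm_add_le _ _
      _ ≤ ‖adjoint A * A + A * adjoint A‖ + (‖P * Q‖ + ‖Q * P‖) := by
          gcongr; exact norm_add_le _ _
      _ = ‖adjoint A * A + A * adjoint A‖ + 2 * ‖P * Q‖ := by rw [hQP]; ring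
  calc numRad A ^ 2 ≤ (‖P + Q‖ / 2) ^ 2 := hsq
    _ = ‖P + Q‖ ^ 2 / 4 := by ring
    _ = ‖(P + Q) * (P + Q)‖ / 4 := by rw [hnormsq]
    _ ≤ (‖adjoint A * A + A * adjoint A‖ + 2 * ‖P * Q‖) / 4 := by linarith
    _ = (1 / 4) * ‖adjoint A * A + A * adjoint A‖ + (1 / 2) * ‖P * Q‖ := by ring
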